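/- On a graded algebra of differential forms with values in a Lie algebra, the graded commutator L_ξ^ω := [ι_ξ, d_ω] of the contraction ι_ξ (degree 0, for odd vector field ξ) with the covariant derivative d_ω (degree 1 derivation) is itself a derivation, and [L_ξ^ω, ι_ξ] = [L_ξ, ι_ξ], i.e. the result is independent of the connection ω. -/
import Mathlib


/-- Abstract model of the graded algebra of Lie-algebra valued differential forms, graded by
total degree.  `iota` is the contraction `ι_ξ` with an odd vector field `ξ` (a degree-0
derivation of the bracket), `d` is the de Rham differential and `br ω ·` is the bracket with a
connection one-form `ω`, so that `d_ω = d + [ω, ·]` is the covariant derivative (a degree-1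
derivation).  Then the graded commutator `L_ξ^ω := [ι_ξ, d_ω] = ι_ξ ∘ d_ω - d_ω ∘ ι_ξ` is
itself a (degree-1, graded) derivation, and `[L_ξ^ω, ι_ξ] = [L_ξ, ι_ξ]` where
`L_ξ := [ι_ξ, d]`, i.e. the result is independent of the connection `ω`.  (The hypothesis
`hι2ω` records that `ι_ξ ω` is a zero-form, which is annihilated by a further contraction.) -/
theorem lie_derivative_commutator_independent_of_connection
    {R L : Type*} [CommRing R] [AddCommGroup L] [Module R L]
    (𝒜 : ℤ → Submodule R L)
    (br : L →ₗ[R] L →ₗ[R] L)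
    (iota d : L →ₗ[R] L) (ω : L)
    (hω : ω ∈ 𝒜 1)
    -- `iota` preserves total degree and is a degree-0 derivation of the bracket
    (hiota_mem : ∀ (i : ℤ) (x : L), x ∈ 𝒜 i → iota x ∈ 𝒜 i)
    (hiota_der : ∀ x y : L, iota (br x y) = br (iota x) y + br x (iota y))
    -- `d` is a degree-1 graded derivation of the bracket
    (hd_mem : ∀ (i : ℤ) (x : L), x ∈ 𝒜 i → d x ∈ 𝒜 (i + 1))
    (hd_der : ∀ (i : ℤ) (x y : L), x ∈ 𝒜 i →
      d (br x y) = br (d x) y + (((-1 : ℤˣ) ^ i : ℤˣ) : ℤ) • br x (d y))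
    -- bracketing with `ω` is a degree-1 graded derivation (graded Jacobi for `ω`)
    (had_mem : ∀ (i : ℤ) (x : L), x ∈ 𝒜 i → br ω x ∈ 𝒜 (i + 1))
    (had_der : ∀ (i : ℤ) (x y : L), x ∈ 𝒜 i →
      br ω (br x y) = br (br ω x) y + (((-1 : ℤˣ) ^ i : ℤˣ) : ℤ) • br x (br ω y))
    -- `ι_ξ ω` is a zero-form, hence killed by a second contraction
    (hι2ω : iota (iota ω) = 0) :
    -- `L_ξ^ω = [ι_ξ, d_ω]` is a degree-1 graded derivation of the bracket ...
    (∀ (i : ℤ) (x y : L), x ∈ 𝒜 i →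
      (iota ∘ₗ (d + br ω) - (d + br ω) ∘ₗ iota) (br x y)
        = br ((iota ∘ₗ (d + br ω) - (d + br ω) ∘ₗ iota) x) y
          + (((-1 : ℤˣ) ^ i : ℤˣ) : ℤ) • br x ((iota ∘ₗ (d + br ω) - (d + br ω) ∘ₗ iota) y)) ∧
    -- ... and `[L_ξ^ω, ι_ξ] = [L_ξ, ι_ξ]`, independently of `ω`
    (iota ∘ₗ (d + br ω) - (d + br ω) ∘ₗ iota) ∘ₗ iota
        - iota ∘ₗ ((iota ∘ₗ (d + br ω) - (d + br ω) ∘ₗ iota))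
      = (iota ∘ₗ d - d ∘ₗ iota) ∘ₗ iota - iota ∘ₗ (iota ∘ₗ d - d ∘ₗ iota) := by
  constructor
  · intro i x y hx
    have hdx := hd_der i x y hx
    have hωx := had_der i x y hx
    have h1 := hd_der i (iota x) y (hiota_mem i x hx)
    have h2 := had_der i (iota x) y (hiota_mem i x hx)
    have h3 := hd_der i x (iota y) hx
    have h4 := had_der i x (iota y) hx
    simp only [LinearMap.sub_apply, LinearMap.comp_apply, LinearMap.add_apply,
      LinearMap.smul_apply, LinearMap.neg_apply, map_add, map_zsmul, h3, h4, hiota_der, hdx, hωx, h1, h2, map_smul, smul_add, smul_sub]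
    simp only [map_add, map_sub, map_zsmul, LinearMap.add_apply, LinearMap.sub_apply,
      LinearMap.smul_apply, smul_add, smul_sub]
    abel
  · ext x
    have h1 : iota (br ω (iota x)) = br (iota ω) (iota x) + br ω (iota (iota x)) :=
      hiota_der ω (iota x)
    have h2 : iota (iota (br ω x))
        = br (iota ω) (iota x) + (br (iota ω) (iota x) + br ω (iota (iota x))) := by
      rw [hiota_der ω x, map_add, hiota_der (iota ω) x, hι2ω, map_zero,
        LinearMap.zero_apply, zero_add, hiota_der ω (iota x)]
    simp only [LinearMap.sub_apply, LinearMap.comp_apply, LinearMap.add_apply,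
      map_add, map_zsmul, map_neg, map_sub, h1, h2]
    abel
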